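/- For odd coprime rational integers a, b ∈ ℤ with a ≡ 1 (mod 2) and gcd(a, 2b) = 1, the quartic residue symbol of b with respect to a (computed in ℤ[i]) equals 1: (b/a)₄ = 1. -/

import Mathlib

noncomputable section
open Complex
open scoped ComplexConjugate Classical

/-- `n` is primary: `n ≡ 1 mod (1+i)^3` in `ℤ[i]`. -/
def IsPrimary (n : GaussianInt) : Prop := (⟨1, 1⟩ : GaussianInt) ^ 3 ∣ n - 1

/-- The additive character `ẽ(z) = exp(2πi (z/(2i) - z̄/(2i)))` on `ℚ(i)`. -/
def echar (z : ℂ) : ℂ :=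
  Complex.exp (2 * Real.pi * I * (z / (2 * I) - (conj z) / (2 * I)))

/-- The quartic residue symbol `(a/ϖ)₄` at a Gaussian prime `ϖ`: the unique fourth root of
unity `ζ ∈ {1, -1, i, -i}` with `a^((N(ϖ)-1)/4) ≡ ζ (mod ϖ)`, or `0` if `ϖ ∣ a`. -/
def quarticSymbolPrime (a ϖ : GaussianInt) : GaussianInt :=
  if ϖ ∣ a then 0
  else if h : ∃ ζ : GaussianInt,
      ζ ∈ ({1, -1, ⟨0, 1⟩, ⟨0, -1⟩} : Set GaussianInt) ∧
      ϖ ∣ a ^ (((Zsqrtd.norm ϖ).natAbs - 1) / 4) - ζ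
    then h.choose else 0

/-- The quartic residue symbol `(a/n)₄` for odd `n ∈ ℤ[i]`, extended multiplicatively from
Gaussian primes, with value `1` when `n` is a unit. -/
def quarticSymbol (a n : GaussianInt) : GaussianInt :=
  if n = 0 then 0
  else ((UniqueFactorizationMonoid.factors n).map fun ϖ => quarticSymbolPrime a ϖ).prod

/-- The twisted quartic Gauss sum `g(k,n) = Σ_{x mod n} (x/n)₄ ẽ(kx/n)`. -/
def gaussSumK (k n : GaussianInt) : ℂ :=
  ∑ᶠ x : GaussianInt ⧸ Ideal.span {n},
    GaussianInt.toComplex (quarticSymbol x.out n) *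
      echar (GaussianInt.toComplex k * GaussianInt.toComplex x.out / GaussianInt.toComplex n)

/-- The quartic Gauss sum `g(n) = g(1,n)`. -/
def quarticGaussSum (n : GaussianInt) : ℂ := gaussSumK 1 n


namespace QRT

open UniqueFactorizationMonoid

lemma mem_S_iff (ζ : GaussianInt) :
    ζ ∈ ({1, -1, ⟨0, 1⟩, ⟨0, -1⟩} : Set GaussianInt) ↔
      ζ = 1 ∨ ζ = -1 ∨ ζ = ⟨0,1⟩ ∨ ζ = ⟨0,-1⟩ := by
  simp [Set.mem_insert_iff]

lemma diff_dvd_four {ζ₁ ζ₂ : GaussianInt}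
    (h1 : ζ₁ ∈ ({1, -1, ⟨0, 1⟩, ⟨0, -1⟩} : Set GaussianInt))
    (h2 : ζ₂ ∈ ({1, -1, ⟨0, 1⟩, ⟨0, -1⟩} : Set GaussianInt))
    (hne : ζ₁ ≠ ζ₂) : (ζ₂ - ζ₁) ∣ 4 := by
  have key : (ζ₂ - ζ₁) ∣ ((Zsqrtd.norm (ζ₂ - ζ₁) : ℤ) : GaussianInt) :=
    ⟨star (ζ₂ - ζ₁), Zsqrtd.norm_eq_mul_conj _⟩
  have h4 : (Zsqrtd.norm (ζ₂ - ζ₁)) ∣ (4:ℤ) := by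
    rcases (mem_S_iff _).1 h1 with rfl|rfl|rfl|rfl <;>
      rcases (mem_S_iff _).1 h2 with rfl|rfl|rfl|rfl <;>
      first
        | exact absurd rfl hne
        | decide
  refine key.trans ?_
  have := (Zsqrtd.intCast_dvd_intCast (d := -1) (Zsqrtd.norm (ζ₂ - ζ₁)) 4).2 h4
  simpa using this

lemma unique_root {ϖ x ζ₁ ζ₂ : GaussianInt} (h4 : ¬ ϖ ∣ 4)
    (h1 : ζ₁ ∈ ({1, -1, ⟨0, 1⟩, ⟨0, -1⟩} : Set GaussianInt))
    (h2 : ζ₂ ∈ ({1, -1, ⟨0, 1⟩, ⟨0, -1⟩} : Set GaussianInt))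
    (d1 : ϖ ∣ x - ζ₁) (d2 : ϖ ∣ x - ζ₂) : ζ₁ = ζ₂ := by
  by_contra hne
  have : ϖ ∣ (ζ₂ - ζ₁) := by
    have := dvd_sub d1 d2
    simpa using this
  exact h4 (this.trans (diff_dvd_four h1 h2 hne))

lemma qsp_eq (b ϖ : GaussianInt) (h4 : ¬ ϖ ∣ 4) (hb : ¬ ϖ ∣ b) {ζ : GaussianInt}
    (hζ : ζ ∈ ({1, -1, ⟨0, 1⟩, ⟨0, -1⟩} : Set GaussianInt))
    (hd : ϖ ∣ b ^ (((Zsqrtd.norm ϖ).natAbs - 1) / 4) - ζ) :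
    quarticSymbolPrime b ϖ = ζ := by
  unfold quarticSymbolPrime
  rw [if_neg hb]
  have hex : ∃ ζ' : GaussianInt,
      ζ' ∈ ({1, -1, ⟨0, 1⟩, ⟨0, -1⟩} : Set GaussianInt) ∧
      ϖ ∣ b ^ (((Zsqrtd.norm ϖ).natAbs - 1) / 4) - ζ' := ⟨ζ, hζ, hd⟩
  rw [dif_pos hex]
  exact unique_root h4 hex.choose_spec.1 hζ hex.choose_spec.2 hd

lemma qsp_assoc (b : GaussianInt) {ϖ ϖ' : GaussianInt} (h : Associated ϖ ϖ') :
    quarticSymbolPrime b ϖ = quarticSymbolPrime b ϖ' := by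
  obtain ⟨u, rfl⟩ := h
  have hdvd : ∀ x : GaussianInt, ϖ * ↑u ∣ x ↔ ϖ ∣ x := fun x => Units.mul_right_dvd
  have hn : (Zsqrtd.norm (ϖ * (u : GaussianInt))).natAbs = (Zsqrtd.norm ϖ).natAbs := by
    rw [Zsqrtd.norm_mul, Int.natAbs_mul, Zsqrtd.norm_eq_one_iff.mpr u.isUnit, mul_one]
  unfold quarticSymbolPrime
  simp only [hdvd, hn]

lemma prod_map_eq (b : GaussianInt) {s t : Multiset GaussianInt}
    (h : Multiset.Rel Associated s t) :
    ((s.map fun ϖ => quarticSymbolPrime b ϖ).prod) =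
      ((t.map fun ϖ => quarticSymbolPrime b ϖ).prod) := by
  have : Multiset.Rel (· = ·) (s.map fun ϖ => quarticSymbolPrime b ϖ)
      (t.map fun ϖ => quarticSymbolPrime b ϖ) :=
    Multiset.rel_map.2 (h.mono fun x _ y _ hxy => qsp_assoc b hxy)
  rw [Multiset.rel_eq.1 this]

lemma qs_mul (b m n : GaussianInt) (hm : m ≠ 0) (hn : n ≠ 0) :
    quarticSymbol b (m * n) = quarticSymbol b m * quarticSymbol b n := by
  unfold quarticSymbol
  rw [if_neg (mul_ne_zero hm hn), if_neg hm, if_neg hn]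
  have hrel : Multiset.Rel Associated (factors (m * n)) (factors m + factors n) := by
    refine factors_unique irreducible_of_factor ?_ ?_
    · intro x hx
      rcases Multiset.mem_add.1 hx with hx | hx
      · exact irreducible_of_factor x hx
      · exact irreducible_of_factor x hx
    · rw [Multiset.prod_add]
      exact (factors_prod (mul_ne_zero hm hn)).trans
        ((Associated.mul_mul (factors_prod hm) (factors_prod hn)).symm)
  rw [prod_map_eq b hrel, Multiset.map_add, Multiset.prod_add]

lemma qs_unit (b n : GaussianInt) (hn : IsUnit n) : quarticSymbol b n = 1 := by
  unfold quarticSymbol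
  rw [if_neg hn.ne_zero]
  have hrel : Multiset.Rel Associated (factors n) 0 := by
    refine factors_unique irreducible_of_factor (by simp) ?_
    rw [Multiset.prod_zero]
    exact (factors_prod hn.ne_zero).trans (associated_one_iff_isUnit.2 hn)
  rw [prod_map_eq b hrel]
  simp

lemma qs_prime (b : GaussianInt) {ϖ : GaussianInt} (hϖ : Prime ϖ) :
    quarticSymbol b ϖ = quarticSymbolPrime b ϖ := by
  unfold quarticSymbol
  rw [if_neg hϖ.ne_zero]
  have hrel : Multiset.Rel Associated (factors ϖ) {ϖ} := by
    refine factors_unique irreducible_of_factor ?_ ?_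
    · intro x hx
      rw [Multiset.mem_singleton] at hx
      exact hx ▸ hϖ.irreducible
    · rw [Multiset.prod_singleton]
      exact factors_prod hϖ.ne_zero
  rw [prod_map_eq b hrel]
  simp

lemma prime_of_norm_prime {z : GaussianInt} (h : Nat.Prime (Zsqrtd.norm z).natAbs) :
    Prime z := by
  rw [← UniqueFactorizationMonoid.irreducible_iff_prime]
  constructor
  · intro hu
    rw [← Zsqrtd.norm_eq_one_iff] at hu
    exact h.ne_one hu
  · intro x y hxy
    have hn : (Zsqrtd.norm x).natAbs * (Zsqrtd.norm y).natAbs = (Zsqrtd.norm z).natAbs := by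
      rw [← Int.natAbs_mul, ← Zsqrtd.norm_mul, ← hxy]
    rcases h.eq_one_or_self_of_dvd (Zsqrtd.norm x).natAbs ⟨_, hn.symm⟩ with h1 | h1
    · exact Or.inl (Zsqrtd.norm_eq_one_iff.1 h1)
    · right
      rw [h1] at hn
      have : (Zsqrtd.norm y).natAbs = 1 := by
        have hpos : 0 < (Zsqrtd.norm z).natAbs := h.pos
        exact (Nat.mul_eq_left hpos.ne').1 hn
      exact Zsqrtd.norm_eq_one_iff.1 this

lemma int_pow_cong (p : ℕ) [Fact p.Prime] (b : ℤ) (hb : ¬ (p:ℤ) ∣ b) {E : ℕ}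
    (hE : (p - 1) ∣ E) : (p:ℤ) ∣ b ^ E - 1 := by
  have h0 : (b : ZMod p) ≠ 0 := fun h => hb ((ZMod.intCast_zmod_eq_zero_iff_dvd b p).1 h)
  obtain ⟨k, rfl⟩ := hE
  have hpow : (b : ZMod p) ^ ((p - 1) * k) = 1 := by
    rw [pow_mul, ZMod.pow_card_sub_one_eq_one h0, one_pow]
  have := (ZMod.intCast_zmod_eq_zero_iff_dvd (b ^ ((p - 1) * k) - 1) p).1 (by push_cast [hpow]; ring)
  exact_mod_cast this

lemma int_dvd_gauss {p : ℕ} {c : ℤ} (h : (p:ℤ) ∣ c) :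
    ((p:ℤ) : GaussianInt) ∣ (c : GaussianInt) := (Zsqrtd.intCast_dvd_intCast _ _).2 h

lemma not_dvd_of_dvd_prime {ϖ : GaussianInt} (hϖ : ¬ IsUnit ϖ) {p : ℕ} (hp : p.Prime)
    (hd : ϖ ∣ ((p:ℤ) : GaussianInt)) {c : ℤ} (hc : ¬ (p:ℤ) ∣ c) :
    ¬ ϖ ∣ (c : GaussianInt) := by
  intro hdc
  have hcop : IsCoprime (p:ℤ) c := by
    rw [(Nat.prime_iff_prime_int.mp hp).coprime_iff_not_dvd]
    exact hc
  obtain ⟨u, v, huv⟩ := hcop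
  apply hϖ
  apply isUnit_of_dvd_one
  have : ϖ ∣ ((u * p + v * c : ℤ) : GaussianInt) := by
    push_cast
    exact dvd_add (Dvd.dvd.mul_left hd _) (Dvd.dvd.mul_left hdc _)
  rwa [huv] at this

lemma cast_nat_int (p : ℕ) : (((p:ℕ) : GaussianInt)) = (((p:ℤ)) : GaussianInt) := by
  push_cast; rfl

lemma qs_inert (b : ℤ) (p : ℕ) [hp : Fact p.Prime] (h3 : p % 4 = 3) (hb : ¬ (p:ℤ) ∣ b) :
    quarticSymbol (b : GaussianInt) (((p:ℤ)) : GaussianInt) = 1 := by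
  have hprime : Prime (((p:ℤ)) : GaussianInt) := by
    rw [← cast_nat_int]
    exact (GaussianInt.prime_iff_mod_four_eq_three_of_nat_prime p).2 h3
  rw [qs_prime _ hprime]
  have hE : ((Zsqrtd.norm (((p:ℤ)) : GaussianInt)).natAbs - 1) / 4 = (p - 1) * ((p + 1) / 4) := by
    rw [Zsqrtd.norm_intCast]
    obtain ⟨k, hk⟩ : ∃ k, p = 4 * k + 3 := ⟨p / 4, by omega⟩
    have h1 : (p : ℤ) * p = ((p * p : ℕ) : ℤ) := by push_cast; ring
    rw [h1, Int.natAbs_natCast]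
    have h2 : p * p = 4 * ((4 * k + 2) * (k + 1)) + 1 := by subst hk; ring
    have h3' : (p - 1) * ((p + 1) / 4) = (4 * k + 2) * (k + 1) := by
      subst hk
      congr 1 <;> omega
    rw [h3']
    omega
  have hdvd : (((p:ℤ)) : GaussianInt) ∣
      (b : GaussianInt) ^ (((Zsqrtd.norm (((p:ℤ)) : GaussianInt)).natAbs - 1) / 4) - 1 := by
    rw [hE]
    have := int_pow_cong p b hb (Dvd.intro _ rfl : (p - 1) ∣ (p - 1) * ((p + 1) / 4))
    have h2 := int_dvd_gauss this
    push_cast at h2 ⊢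
    convert h2 using 2
  apply qsp_eq
  · intro hd
    have : (p:ℤ) ∣ 4 := by
      rw [← Zsqrtd.intCast_dvd_intCast (d := -1)]
      have h4 : ((4:ℤ) : GaussianInt) = 4 := by push_cast; rfl
      rw [h4]
      exact hd
    have : p ∣ 4 := by exact_mod_cast this
    have := (Nat.prime_dvd_prime_iff_eq hp.out Nat.prime_two).1
      (hp.out.dvd_of_dvd_pow (show p ∣ 2 ^ 2 by norm_num [this]))
    omega
  · intro hd
    exact hb ((Zsqrtd.intCast_dvd_intCast _ _).1 hd)
  · exact Or.inl rfl |> (mem_S_iff 1).2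
  · exact hdvd

lemma star_S {ζ : GaussianInt} (h : ζ ∈ ({1, -1, ⟨0, 1⟩, ⟨0, -1⟩} : Set GaussianInt)) :
    star ζ ∈ ({1, -1, ⟨0, 1⟩, ⟨0, -1⟩} : Set GaussianInt) := by
  rw [mem_S_iff] at h ⊢
  rcases h with rfl|rfl|rfl|rfl
  · exact Or.inl (by decide)
  · exact Or.inr (Or.inl (by decide))
  · exact Or.inr (Or.inr (Or.inr (by decide)))
  · exact Or.inr (Or.inr (Or.inl (by decide)))

lemma mul_star_S {ζ : GaussianInt} (h : ζ ∈ ({1, -1, ⟨0, 1⟩, ⟨0, -1⟩} : Set GaussianInt)) :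
    ζ * star ζ = 1 := by
  rw [mem_S_iff] at h
  rcases h with rfl|rfl|rfl|rfl <;> decide

lemma star_intCast (b : ℤ) : star ((b : ℤ) : GaussianInt) = (b : GaussianInt) := by
  ext <;> simp

lemma qs_split (b : ℤ) (p : ℕ) [hp : Fact p.Prime] (h1 : p % 4 = 1) (hb : ¬ (p:ℤ) ∣ b) :
    quarticSymbol (b : GaussianInt) (((p:ℤ)) : GaussianInt) = 1 := by
  obtain ⟨x, y, hxy⟩ := Nat.Prime.sq_add_sq (p := p) (by omega)
  set ϖ : GaussianInt := ⟨(x:ℤ), (y:ℤ)⟩ with hϖdef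
  have hnorm : Zsqrtd.norm ϖ = (p:ℤ) := by
    have : ((x:ℤ))^2 + ((y:ℤ))^2 = (p:ℤ) := by exact_mod_cast hxy
    simp only [Zsqrtd.norm, hϖdef]
    ring_nf
    linarith [this]
  have hnatAbs : (Zsqrtd.norm ϖ).natAbs = p := by rw [hnorm, Int.natAbs_natCast]
  have hπ : Prime ϖ := prime_of_norm_prime (by rw [hnatAbs]; exact hp.out)
  have hπ' : Prime (star ϖ) := prime_of_norm_prime
    (by rw [Zsqrtd.norm_conj, hnatAbs]; exact hp.out)
  have hmul : (((p:ℤ)) : GaussianInt) = ϖ * star ϖ := by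
    rw [← hnorm, Zsqrtd.norm_eq_mul_conj]
  have hπp : ϖ ∣ (((p:ℤ)) : GaussianInt) := hmul ▸ dvd_mul_right _ _
  have hπ'p : star ϖ ∣ (((p:ℤ)) : GaussianInt) := hmul ▸ dvd_mul_left _ _
  -- exponent
  obtain ⟨k, hk⟩ : ∃ k, p = 4 * k + 1 := ⟨p / 4, by omega⟩
  have hE : ((Zsqrtd.norm ϖ).natAbs - 1) / 4 = k := by rw [hnatAbs]; omega
  have hE' : ((Zsqrtd.norm (star ϖ)).natAbs - 1) / 4 = k := by
    rw [Zsqrtd.norm_conj, hnatAbs]; omega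
  -- the power t
  set t : GaussianInt := (b : GaussianInt) ^ k with ht
  have ht4 : ϖ ∣ (t - 1) * ((t - -1) * ((t - ⟨0,1⟩) * (t - ⟨0,-1⟩))) := by
    have hfer : (p:ℤ) ∣ b ^ (4 * k) - 1 := by
      apply int_pow_cong p b hb
      exact ⟨1, by omega⟩
    have h2 : (((p:ℤ)) : GaussianInt) ∣ (b : GaussianInt) ^ (4 * k) - 1 := by
      have := int_dvd_gauss hfer
      push_cast at this ⊢
      exact this
    have hfac : (b : GaussianInt) ^ (4 * k) - 1 =
        (t - 1) * ((t - -1) * ((t - ⟨0,1⟩) * (t - ⟨0,-1⟩))) := by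
      have hi : (⟨0,1⟩ : GaussianInt) ^ 2 = -1 := by decide
      have hneg : (⟨0,-1⟩ : GaussianInt) = -⟨0,1⟩ := by decide
      rw [hneg, ht, mul_comm 4 k, pow_mul]
      linear_combination (((b : GaussianInt) ^ k) ^ 2 - 1) * hi
    rw [← hfac]
    exact hπp.trans h2
  -- find the root of unity
  have hroot : ∃ ζ : GaussianInt, ζ ∈ ({1, -1, ⟨0, 1⟩, ⟨0, -1⟩} : Set GaussianInt) ∧ ϖ ∣ t - ζ := by
    rcases hπ.dvd_or_dvd ht4 with h | h
    · exact ⟨1, (mem_S_iff 1).2 (Or.inl rfl), h⟩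
    rcases hπ.dvd_or_dvd h with h | h
    · exact ⟨-1, (mem_S_iff _).2 (Or.inr (Or.inl rfl)), h⟩
    rcases hπ.dvd_or_dvd h with h | h
    · exact ⟨⟨0,1⟩, (mem_S_iff _).2 (Or.inr (Or.inr (Or.inl rfl))), h⟩
    · exact ⟨⟨0,-1⟩, (mem_S_iff _).2 (Or.inr (Or.inr (Or.inr rfl))), h⟩
  obtain ⟨ζ, hζS, hζd⟩ := hroot
  -- non-divisibility conditions
  have h4 : ¬ (p:ℤ) ∣ 4 := by
    intro hd
    have : p ∣ 4 := by exact_mod_cast hd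
    have := (Nat.prime_dvd_prime_iff_eq hp.out Nat.prime_two).1
      (hp.out.dvd_of_dvd_pow (show p ∣ 2 ^ 2 by norm_num [this]))
    omega
  have hϖ4 : ¬ ϖ ∣ 4 := by
    have := not_dvd_of_dvd_prime hπ.not_unit hp.out hπp h4
    intro hd
    apply this
    have h4' : ((4:ℤ) : GaussianInt) = 4 := by push_cast; rfl
    rw [h4']
    exact hd
  have hϖ'4 : ¬ star ϖ ∣ 4 := by
    have := not_dvd_of_dvd_prime hπ'.not_unit hp.out hπ'p h4
    intro hd
    apply this
    have h4' : ((4:ℤ) : GaussianInt) = 4 := by push_cast; rfl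
    rw [h4']
    exact hd
  have hϖb : ¬ ϖ ∣ (b : GaussianInt) := not_dvd_of_dvd_prime hπ.not_unit hp.out hπp hb
  have hϖ'b : ¬ star ϖ ∣ (b : GaussianInt) := not_dvd_of_dvd_prime hπ'.not_unit hp.out hπ'p hb
  -- star divisibility
  have hstart : star t = t := by rw [ht, star_pow, star_intCast]
  have hζd' : star ϖ ∣ t - star ζ := by
    obtain ⟨c, hc⟩ := hζd
    refine ⟨star c, ?_⟩
    have h' := congrArg star hc
    rw [star_sub, star_mul, hstart] at h'
    rw [h', mul_comm]
  rw [hmul, qs_mul _ _ _ hπ.ne_zero hπ'.ne_zero, qs_prime _ hπ, qs_prime _ hπ',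
    qsp_eq _ _ hϖ4 hϖb hζS (by rw [hE]; exact hζd),
    qsp_eq _ _ hϖ'4 hϖ'b (star_S hζS) (by rw [hE']; exact hζd'),
    mul_star_S hζS]

lemma qs_prime_nat (b : ℤ) (p : ℕ) (hp : p.Prime) (hodd : p % 2 = 1) (hb : ¬ (p:ℤ) ∣ b) :
    quarticSymbol (b : GaussianInt) (((p:ℤ)) : GaussianInt) = 1 := by
  haveI := Fact.mk hp
  have : p % 4 = 1 ∨ p % 4 = 3 := by omega
  rcases this with h | h
  · exact qs_split b p h hb
  · exact qs_inert b p h hb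

lemma main_aux (b : ℤ) : ∀ n : ℕ, ∀ a : ℤ, a.natAbs = n → Odd a → Int.gcd a (2 * b) = 1 →
    quarticSymbol (b : GaussianInt) (a : GaussianInt) = 1 := by
  intro n
  induction n using Nat.strong_induction_on with
  | _ n ih =>
    intro a han ha h
    rcases eq_or_ne a.natAbs 1 with h1 | hne1
    · have : IsUnit (a : GaussianInt) := by
        rcases Int.natAbs_eq_iff.1 h1 with rfl | rfl
        · simp
        · simp
      exact qs_unit _ _ this
    · have ha0 : a ≠ 0 := by
        rintro rfl
        exact (Int.not_odd_iff_even.2 Even.zero) ha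
      obtain ⟨p, hp, hpdvd⟩ := Nat.exists_prime_and_dvd hne1
      have hpa : (p:ℤ) ∣ a := Int.dvd_natAbs.1 (Int.natCast_dvd_natCast.2 hpdvd)
      obtain ⟨c, rfl⟩ := hpa
      have hc0 : c ≠ 0 := by rintro rfl; exact ha0 (by ring)
      have hpodd : p % 2 = 1 := by
        have : Odd ((p:ℤ)) := (Int.odd_mul.1 ha).1
        have : Odd p := by exact_mod_cast this
        exact Nat.odd_iff.1 this
      have hpb : ¬ (p:ℤ) ∣ b := by
        intro hd
        have hd1 : (p:ℤ) ∣ ((Int.gcd ((p:ℤ) * c) (2 * b) : ℕ) : ℤ) :=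
          Int.dvd_coe_gcd (dvd_mul_right _ _) (Dvd.dvd.mul_left hd 2)
        rw [h] at hd1
        have : p ∣ 1 := by exact_mod_cast hd1
        exact hp.one_lt.ne' (Nat.dvd_one.1 this)
      have hcodd : Odd c := (Int.odd_mul.1 ha).2
      have hcg : Int.gcd c (2 * b) = 1 := by
        have hd1 : ((Int.gcd c (2 * b) : ℕ) : ℤ) ∣ ((Int.gcd ((p:ℤ) * c) (2 * b) : ℕ) : ℤ) :=
          Int.dvd_coe_gcd ((Int.gcd_dvd_left _ _).mul_left _) (Int.gcd_dvd_right _ _)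
        rw [h] at hd1
        have : Int.gcd c (2 * b) ∣ 1 := by exact_mod_cast hd1
        exact Nat.dvd_one.1 this
      have hlt : c.natAbs < n := by
        have hn : n = p * c.natAbs := by rw [← han, Int.natAbs_mul, Int.natAbs_natCast]
        have h2 : 2 ≤ p := hp.two_le
        have h3 : 1 ≤ c.natAbs := Int.natAbs_pos.2 hc0
        calc c.natAbs < 2 * c.natAbs := by omega
          _ ≤ p * c.natAbs := Nat.mul_le_mul_right _ h2
          _ = n := hn.symm
      have hcast : (((p:ℤ) * c : ℤ) : GaussianInt) = ((p:ℤ) : GaussianInt) * (c : GaussianInt) := by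
        push_cast; ring
      have hpne : ((p:ℤ) : GaussianInt) ≠ 0 := by
        intro h0
        have : ((p:ℤ) : GaussianInt) = ((0:ℤ) : GaussianInt) := by simpa using h0
        have : (p:ℤ) = 0 := by
          have := congrArg Zsqrtd.re this
          simpa using this
        simp [hp.ne_zero] at this
      have hcne : (c : GaussianInt) ≠ 0 := by
        intro h0
        have : (c:ℤ) = 0 := by
          have := congrArg Zsqrtd.re h0
          simpa using this
        exact hc0 this
      rw [hcast, qs_mul _ _ _ hpne hcne, qs_prime_nat b p hp hpodd hpb,
        ih c.natAbs hlt c rfl hcodd hcg, one_mul]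

end QRT

/-- for odd `a ∈ ℤ` with `gcd(a, 2b) = 1`, the quartic residue symbol satisfies
`(b/a)₄ = 1`. -/
theorem quartic_symbol_rational_trivial (a b : ℤ) (ha : Odd a) (h : Int.gcd a (2 * b) = 1) :
    quarticSymbol (b : GaussianInt) (a : GaussianInt) = 1 :=
  QRT.main_aux b a.natAbs a rfl ha h
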